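/- Let G be a graph, k ≥ 1, φ : V(G) → [k] a coloring, and for i ∈ [k] let Aᵢ be the set of k-walks in G that visit at least one vertex of color i. Then the set of colorful k-paths in G equals ∩_{i∈[k]} Aᵢ, and by inclusion–exclusion, the number of colorful k-paths equals Σ_{X ⊆ [k]} (−1)^(|X|) · N(X), where N(X) is the number of k-walks all of whose vertices have colors in [k] \ X. -/
import Mathlib

open scoped Classical

/-- `w : Fin k → V` is a walk in the simple graph `G`. -/
def IsGWalk {V : Type*} (G : SimpleGraph V) {k : ℕ} (w : Fin k → V) : Prop :=
  ∀ i : ℕ, ∀ h : i + 1 < k, G.Adj (w ⟨i, Nat.lt_of_succ_lt h⟩) (w ⟨i + 1, h⟩)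

theorem colorful_paths_inclusion_exclusion {V : Type*} [Fintype V]
    (G : SimpleGraph V) (k : ℕ) (hk : 1 ≤ k) (φ : V → Fin k) :
    (Finset.univ.filter
        (fun w : Fin k → V => IsGWalk G w ∧ Function.Injective (fun i => φ (w i))) =
      Finset.univ.filter
        (fun w : Fin k → V => IsGWalk G w ∧ ∀ c : Fin k, ∃ j : Fin k, φ (w j) = c)) ∧
    ((Finset.univ.filter
        (fun w : Fin k → V => IsGWalk G w ∧
          Function.Injective (fun i => φ (w i)))).card : ℤ) =
      ∑ X : Finset (Fin k), (-1 : ℤ) ^ X.card *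
        ((Finset.univ.filter
            (fun w : Fin k → V => IsGWalk G w ∧ ∀ i : Fin k, φ (w i) ∉ X)).card : ℤ) := by
  have hiff : ∀ w : Fin k → V,
      Function.Injective (fun i => φ (w i)) ↔ ∀ c : Fin k, ∃ j : Fin k, φ (w j) = c := by
    intro w
    rw [Finite.injective_iff_surjective]
    exact Iff.rfl
  have hfilter :
      Finset.univ.filter
        (fun w : Fin k → V => IsGWalk G w ∧ Function.Injective (fun i => φ (w i))) =
      Finset.univ.filter
        (fun w : Fin k → V => IsGWalk G w ∧ ∀ c : Fin k, ∃ j : Fin k, φ (w j) = c) := by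
    apply Finset.filter_congr
    intro w _
    simp [hiff w]
  refine ⟨hfilter, ?_⟩
  rw [hfilter]
  have key : ∀ w : Fin k → V,
      (∑ X : Finset (Fin k), (-1 : ℤ) ^ X.card *
        (if IsGWalk G w ∧ ∀ i : Fin k, φ (w i) ∉ X then 1 else 0)) =
      (if IsGWalk G w ∧ ∀ c : Fin k, ∃ j : Fin k, φ (w j) = c then 1 else 0) := by
    intro w
    by_cases hw : IsGWalk G w
    · simp only [hw, true_and]
      set T := (Finset.image (fun i => φ (w i)) Finset.univ)ᶜ with hT
      have hmem : ∀ X : Finset (Fin k), (∀ i : Fin k, φ (w i) ∉ X) ↔ X ⊆ T := by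
        intro X
        constructor
        · intro h c hc
          simp only [hT, Finset.mem_compl, Finset.mem_image, Finset.mem_univ, true_and]
          rintro ⟨j, rfl⟩
          exact h j hc
        · intro h i hi
          have := h hi
          simp only [hT, Finset.mem_compl, Finset.mem_image, Finset.mem_univ, true_and] at this
          exact this ⟨i, rfl⟩
      have h2 : (∀ c : Fin k, ∃ j : Fin k, φ (w j) = c) ↔ T = ∅ := by
        simp only [hT, Finset.compl_eq_empty_iff, Finset.eq_univ_iff_forall,
          Finset.mem_image, Finset.mem_univ, true_and]
      calc (∑ X : Finset (Fin k), (-1 : ℤ) ^ X.card *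
              (if ∀ i : Fin k, φ (w i) ∉ X then 1 else 0))
          = ∑ X ∈ T.powerset, (-1 : ℤ) ^ X.card := by
            rw [← Finset.sum_filter_add_sum_filter_not Finset.univ (fun X => X ⊆ T)]
            have e1 : ∀ X ∈ Finset.univ.filter (fun X : Finset (Fin k) => X ⊆ T),
                (-1 : ℤ) ^ X.card * (if ∀ i : Fin k, φ (w i) ∉ X then 1 else 0)
                  = (-1 : ℤ) ^ X.card := by
              intro X hX
              simp only [Finset.mem_filter] at hX
              rw [if_pos ((hmem X).mpr hX.2), mul_one]
            have e2 : ∀ X ∈ Finset.univ.filter (fun X : Finset (Fin k) => ¬ X ⊆ T),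
                (-1 : ℤ) ^ X.card * (if ∀ i : Fin k, φ (w i) ∉ X then 1 else 0) = 0 := by
              intro X hX
              simp only [Finset.mem_filter] at hX
              rw [if_neg (fun h => hX.2 ((hmem X).mp h)), mul_zero]
            rw [Finset.sum_congr rfl e1, Finset.sum_congr rfl e2, Finset.sum_const_zero,
              add_zero]
            congr 1
            ext X
            simp [Finset.mem_powerset]
        _ = (if ∀ c : Fin k, ∃ j : Fin k, φ (w j) = c then 1 else 0) := by
            rw [Finset.sum_powerset_neg_one_pow_card]
            simp only [h2]
    · simp [hw]
  calc ((Finset.univ.filter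
        (fun w : Fin k → V => IsGWalk G w ∧ ∀ c : Fin k, ∃ j : Fin k, φ (w j) = c)).card : ℤ)
      = ∑ w : Fin k → V,
          (if IsGWalk G w ∧ ∀ c : Fin k, ∃ j : Fin k, φ (w j) = c then (1 : ℤ) else 0) := by
        rw [Finset.card_filter]
        push_cast
        rfl
    _ = ∑ w : Fin k → V, ∑ X : Finset (Fin k), (-1 : ℤ) ^ X.card *
          (if IsGWalk G w ∧ ∀ i : Fin k, φ (w i) ∉ X then 1 else 0) := by
        exact Finset.sum_congr rfl fun w _ => (key w).symm
    _ = ∑ X : Finset (Fin k), (-1 : ℤ) ^ X.card *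
        ((Finset.univ.filter
            (fun w : Fin k → V => IsGWalk G w ∧ ∀ i : Fin k, φ (w i) ∉ X)).card : ℤ) := by
        rw [Finset.sum_comm]
        refine Finset.sum_congr rfl fun X _ => ?_
        rw [← Finset.mul_sum, Finset.card_filter]
        push_cast
        rfl
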